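/- (Local Yang-Baxter equation for the two-parameter R-matrix.) For real numbers x,y define R(x,y) as the 2×2 matrix with rows (x, y) and (1−x, 1−y), and for i < j in {1,2,3} let R_{ij}(x,y) be the 3×3 matrix equal to the identity except that R(x,y) is embedded at rows and columns i,j. Let x,y,z,u,v,w be real numbers, set A = uvx − ux − vy + xz, B = uwx − ux − wy + 1, and C = (AB − A(1−u)(1−w)x − Bv(x−y)) / (AB − A(1−u)(1−w) − Bvz(x−y)), and assume x ≠ 0, A ≠ 0, B ≠ 0, C ≠ 0, and AB − A(1−u)(1−w) − Bvz(x−y) ≠ 0. Define X = zC, Y = (z − A/x)C, Z = x/C, U = 1 − B, V = vz(x−y)/A, W = 1 − (1−u)(1−w)/B. Then R_{12}(x,y) R_{13}(z,u) R_{23}(v,w) = R_{23}(V,W) R_{13}(Z,U) R_{12}(X,Y). -/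

import Mathlib

open Matrix

/-- Embedding of the two-parameter R-matrix `R(x,y) = !![x, y; 1−x, 1−y]` into the 3×3
identity at rows/columns `1,2`. -/
def R12 (x y : ℝ) : Matrix (Fin 3) (Fin 3) ℝ :=
  !![x, y, 0; 1 - x, 1 - y, 0; 0, 0, 1]

/-- Embedding at rows/columns `1,3`. -/
def R13 (x y : ℝ) : Matrix (Fin 3) (Fin 3) ℝ :=
  !![x, 0, y; 0, 1, 0; 1 - x, 0, 1 - y]

/-- Embedding at rows/columns `2,3`. -/
def R23 (x y : ℝ) : Matrix (Fin 3) (Fin 3) ℝ :=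
  !![1, 0, 0; 0, x, y; 0, 1 - x, 1 - y]

set_option maxHeartbeats 4000000 in
/-- Local Yang–Baxter equation for the two-parameter R-matrix. -/
theorem stmt_19 (x y z u v w : ℝ)
    (A B C : ℝ)
    (hA : A = u * v * x - u * x - v * y + x * z)
    (hB : B = u * w * x - u * x - w * y + 1)
    (hC : C = (A * B - A * (1 - u) * (1 - w) * x - B * v * (x - y))
      / (A * B - A * (1 - u) * (1 - w) - B * v * z * (x - y)))
    (hx : x ≠ 0) (hA0 : A ≠ 0) (hB0 : B ≠ 0) (hC0 : C ≠ 0)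
    (hden : A * B - A * (1 - u) * (1 - w) - B * v * z * (x - y) ≠ 0)
    (X Y Z U V W : ℝ)
    (hX : X = z * C) (hY : Y = (z - A / x) * C) (hZ : Z = x / C)
    (hU : U = 1 - B) (hV : V = v * z * (x - y) / A)
    (hW : W = 1 - (1 - u) * (1 - w) / B) :
    R12 x y * R13 z u * R23 v w = R23 V W * R13 Z U * R12 X Y := by
  have hN : A * B - A * (1 - u) * (1 - w) * x - B * v * (x - y) ≠ 0 := by
    intro h
    apply hC0
    rw [hC, h, zero_div]
  generalize hDd : A * B - A * (1 - u) * (1 - w) - B * v * z * (x - y) = D at hC hden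
  generalize hNd : A * B - A * (1 - u) * (1 - w) * x - B * v * (x - y) = N at hC hN
  ext i j
  fin_cases i <;> fin_cases j <;>
    simp only [R12, R13, R23, Matrix.mul_fin_three, Matrix.cons_val', Matrix.cons_val_zero,
      Matrix.cons_val_one, Matrix.head_cons, Matrix.empty_val', Matrix.cons_val_fin_one,
      Matrix.head_fin_const, Matrix.cons_val_two, Matrix.tail_cons, Matrix.of_apply,
      Fin.zero_eta, Fin.mk_one, Fin.reduceFinMk] <;>
    simp only [hX, hY, hZ, hU, hV, hW, hC] <;>
    field_simp <;>
    subst hDd hNd hA hB <;>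
    ring
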